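/- Let I_x, I₁ ⊆ ℝ be intervals, θ₁ > 0 and θ₂ ∈ ℝ. Set Ω_per := I_x × I₁ × (0,1) ⊆ ℝ³ and Q := {(x,z) ∈ ℝ² : x ∈ I_x and θ₁·z ∈ I₁}. Let V_C : Q × (0,1) → ℂ be any function, and define W : Ω_per → ℂ by W(x, z₁, z₂) := V_C(x, z₁/θ₁, t − ⌊t⌋) where t := z₂ − (θ₂/θ₁)·z₁. Then W is well defined (i.e. (x, z₁/θ₁) ∈ Q whenever (x,z₁,z₂) ∈ Ω_per) and the shear transform (S W)(x,z,s) := W(x, θ₁·z, θ₂·z + s − ⌊θ₂·z + s⌋) satisfies (S W)(x, z, s) = V_C(x, z, s) for every (x,z) ∈ Q and s ∈ (0,1). Consequently the shear transform S is surjective from functions on Ω_per onto functions on Q × (0,1). -/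

import Mathlib

/-- Invertibility (surjectivity) of the shear transform (Proposition 3.1 of the paper):
given any `V_C` on `Q × (0,1)`, the function
`W(x, z₁, z₂) := V_C(x, z₁/θ₁, fract(z₂ − (θ₂/θ₁)·z₁))` is well defined on
`Ω_per = I_x × I₁ × (0,1)` and satisfies `(S W)(x, z, s) = V_C(x, z, s)` for all
`(x,z) ∈ Q`, `s ∈ (0,1)`, where `(S W)(x,z,s) = W(x, θ₁·z, fract(θ₂·z + s))`. -/
theorem stmt_7
    (Ix I₁ : Set ℝ) (hIx : Ix.OrdConnected) (hI₁ : I₁.OrdConnected)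
    (θ₁ θ₂ : ℝ) (hθ₁ : 0 < θ₁)
    (Ωper : Set (ℝ × ℝ × ℝ)) (hΩper : Ωper = Ix ×ˢ I₁ ×ˢ Set.Ioo (0 : ℝ) 1)
    (Q : Set (ℝ × ℝ)) (hQ : Q = {p : ℝ × ℝ | p.1 ∈ Ix ∧ θ₁ * p.2 ∈ I₁})
    (VC : ℝ × ℝ → ℝ → ℂ)
    (W : ℝ × ℝ × ℝ → ℂ)
    (hW : ∀ x z₁ z₂ : ℝ,
      W (x, z₁, z₂) = VC (x, z₁ / θ₁) (Int.fract (z₂ - θ₂ / θ₁ * z₁))) :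
    (∀ y ∈ Ωper, (y.1, y.2.1 / θ₁) ∈ Q) ∧
    (∀ p ∈ Q, ∀ s ∈ Set.Ioo (0 : ℝ) 1,
      W (p.1, θ₁ * p.2, Int.fract (θ₂ * p.2 + s)) = VC p s) := by
  subst hΩper hQ
  constructor
  · rintro ⟨x, z₁, z₂⟩ ⟨hx, hz₁, hz₂⟩
    refine ⟨hx, ?_⟩
    simpa [mul_div_cancel₀ _ hθ₁.ne'] using hz₁
  · rintro ⟨x, z⟩ hp s hs
    rw [hW]
    have h1 : θ₁ * z / θ₁ = z := by field_simp
    have h2 : θ₂ / θ₁ * (θ₁ * z) = θ₂ * z := by field_simp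
    rw [h1, h2]
    have e : Int.fract (θ₂ * z + s) - θ₂ * z = s - (⌊θ₂ * z + s⌋ : ℤ) := by
      rw [Int.fract]; push_cast; ring
    rw [e, Int.fract_sub_intCast, Int.fract_eq_self.mpr ⟨hs.1.le, hs.2⟩]
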